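/- Monotonicity of the conditional information spectrum entropy of pure states under LOCC (in Lo–Popescu form): let |ψ⟩ be a unit vector in ℂ^{d_A} ⊗ ℂ^{d_B}, ψ_AB = |ψ⟩⟨ψ|, and ψ_B = Tr_A ψ_AB. Let (U_j)_{j∈J} be a finite family of d_A×d_A unitaries and (K_j)_{j∈J} a family of d_B×d_B matrices with ∑_{j∈J} K_jᴴ K_j = I, and set σ_AB := ∑_{j∈J} (U_j ⊗ K_j) ψ_AB (U_jᴴ ⊗ K_jᴴ) and σ_B := Tr_A σ_AB. Then for every ε ∈ (0,1), D̲_s^ε(σ_AB‖I_A ⊗ σ_B) ≤ D̲_s^ε(ψ_AB‖I_A ⊗ ψ_B), where each supremum is taken in the extended reals; equivalently, the conditional entropies H̄_s^ε(A|B)_ψ := −D̲_s^ε(ψ_AB‖I_A⊗ψ_B) and H̄_s^ε(A|B)_σ := −D̲_s^ε(σ_AB‖I_A⊗σ_B) satisfy H̄_s^ε(A|B)_ψ ≤ H̄_s^ε(A|B)_σ. -/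

import Mathlib

open Matrix
open scoped ComplexOrder

noncomputable section

/-- Positive part `C₊` of a Hermitian matrix, obtained by applying `x ↦ max x 0` to the
eigenvalues in a spectral decomposition (junk value `0` for non-Hermitian input). -/
def matPos {n : Type*} [Fintype n] [DecidableEq n] (A : Matrix n n ℂ) : Matrix n n ℂ :=
  if hA : A.IsHermitian then
    (hA.eigenvectorUnitary : Matrix n n ℂ) *
      Matrix.diagonal (fun i => ((max (hA.eigenvalues i) 0 : ℝ) : ℂ)) *
      star (hA.eigenvectorUnitary : Matrix n n ℂ)
  else 0

/-- `Tr C₊` as a real number. -/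
def trPos {n : Type*} [Fintype n] [DecidableEq n] (A : Matrix n n ℂ) : ℝ :=
  (matPos A).trace.re

/-- Spectral projection of a Hermitian matrix onto `[0, ∞)` (junk value `0` for
non-Hermitian input). -/
def projNonneg {n : Type*} [Fintype n] [DecidableEq n] (A : Matrix n n ℂ) : Matrix n n ℂ :=
  if hA : A.IsHermitian then
    (hA.eigenvectorUnitary : Matrix n n ℂ) *
      Matrix.diagonal (fun i => if 0 ≤ hA.eigenvalues i then (1 : ℂ) else 0) *
      star (hA.eigenvectorUnitary : Matrix n n ℂ)
  else 0

/-- The information spectrum relative entropy `D̲_s^ε(ρ‖σ)`, with the supremum taken in the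
extended reals. -/
def DlowE {n : Type*} [Fintype n] [DecidableEq n] (ε : ℝ) (ρ σ : Matrix n n ℂ) : EReal :=
  sSup (Real.toEReal '' {γ : ℝ | 1 - ε ≤ trPos (ρ - (2 : ℝ) ^ γ • σ)})

/-- The information spectrum relative entropy `D̄_s^ε(ρ‖σ)`, with the infimum taken in the
extended reals. -/
def DhighE {n : Type*} [Fintype n] [DecidableEq n] (ε : ℝ) (ρ σ : Matrix n n ℂ) : EReal :=
  sInf (Real.toEReal '' {γ : ℝ | trPos (ρ - (2 : ℝ) ^ γ • σ) ≤ ε})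

open Kronecker

/-- Partial trace over the first (`A`) tensor factor. -/
def trA {dA dB : ℕ} (M : Matrix (Fin dA × Fin dB) (Fin dA × Fin dB) ℂ) :
    Matrix (Fin dB) (Fin dB) ℂ :=
  Matrix.of fun k l => ∑ i, M (i, k) (i, l)


section Aux

variable {n : Type*} [Fintype n] [DecidableEq n]

lemma posSemidef_sum {J : Type*} [Fintype J] {f : J → Matrix n n ℂ}
    (h : ∀ j, (f j).PosSemidef) : (∑ j, f j).PosSemidef := by
  classical
  exact Finset.sum_induction f _ (fun a b ha hb => ha.add hb) Matrix.PosSemidef.zero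
    (fun j _ => h j)

lemma isHermitian_sum {J : Type*} [Fintype J] {f : J → Matrix n n ℂ}
    (h : ∀ j, (f j).IsHermitian) : (∑ j, f j).IsHermitian := by
  classical
  exact Finset.sum_induction f _ (fun a b ha hb => ha.add hb) Matrix.isHermitian_zero
    (fun j _ => h j)

lemma diag_nonneg_of_posSemidef {A : Matrix n n ℂ} (hA : A.PosSemidef) (i : n) :
    0 ≤ A i i := by
  have h := hA.dotProduct_mulVec_nonneg (Pi.single i 1)
  simpa [dotProduct, Matrix.mulVec, Pi.single_apply] using h

lemma trace_nonneg_of_posSemidef {A : Matrix n n ℂ} (hA : A.PosSemidef) : 0 ≤ A.trace :=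
  Finset.sum_nonneg fun i _ => diag_nonneg_of_posSemidef hA i

lemma trace_mul_re_nonneg {P M : Matrix n n ℂ} (hP : P.PosSemidef) (hM : M.PosSemidef) :
    0 ≤ (P * M).trace.re := by
  open scoped MatrixOrder in
  obtain ⟨B, hB⟩ := CStarAlgebra.nonneg_iff_eq_star_mul_self.mp hP.nonneg
  have h1 : (P * M).trace = (B * M * Bᴴ).trace := by
    rw [Matrix.trace_mul_cycle B M Bᴴ, hB, Matrix.star_eq_conjTranspose, Matrix.mul_assoc]
  have h2 : (0 : ℂ) ≤ (B * M * Bᴴ).trace :=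
    trace_nonneg_of_posSemidef (hM.mul_mul_conjTranspose_same B)
  rw [h1]
  exact (Complex.le_def.mp h2).1

lemma conj_diag_posSemidef (V : Matrix n n ℂ) (d : n → ℂ) (hd : ∀ i, 0 ≤ d i) :
    (V * Matrix.diagonal d * star V).PosSemidef := by
  have h : (Matrix.diagonal d).PosSemidef := Matrix.PosSemidef.diagonal hd
  simpa [Matrix.star_eq_conjTranspose] using h.mul_mul_conjTranspose_same V

section Spectral

lemma eigU_star_mul_self {A : Matrix n n ℂ} (hA : A.IsHermitian) :
    star (hA.eigenvectorUnitary : Matrix n n ℂ) * (hA.eigenvectorUnitary : Matrix n n ℂ) = 1 :=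
  Unitary.star_mul_self_of_mem hA.eigenvectorUnitary.2

lemma eigU_mul_star_self {A : Matrix n n ℂ} (hA : A.IsHermitian) :
    (hA.eigenvectorUnitary : Matrix n n ℂ) * star (hA.eigenvectorUnitary : Matrix n n ℂ) = 1 :=
  Unitary.mul_star_self_of_mem hA.eigenvectorUnitary.2

lemma spectral_decomp {A : Matrix n n ℂ} (hA : A.IsHermitian) :
    A = (hA.eigenvectorUnitary : Matrix n n ℂ) *
      Matrix.diagonal (fun i => ((hA.eigenvalues i : ℝ) : ℂ)) *
      star (hA.eigenvectorUnitary : Matrix n n ℂ) := by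
  have h := hA.spectral_theorem
  rw [Unitary.conjStarAlgAut_apply] at h
  exact h

lemma matPos_posSemidef {A : Matrix n n ℂ} (hA : A.IsHermitian) : (matPos A).PosSemidef := by
  rw [matPos, dif_pos hA]
  exact conj_diag_posSemidef _ _ fun i => by
    exact_mod_cast le_max_right (hA.eigenvalues i) 0

lemma matPos_sub_posSemidef {A : Matrix n n ℂ} (hA : A.IsHermitian) :
    (matPos A - A).PosSemidef := by
  have hd : matPos A - A = (hA.eigenvectorUnitary : Matrix n n ℂ) *
      Matrix.diagonal (fun i => ((max (hA.eigenvalues i) 0 - hA.eigenvalues i : ℝ) : ℂ)) *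
      star (hA.eigenvectorUnitary : Matrix n n ℂ) := by
    have h1 : (hA.eigenvectorUnitary : Matrix n n ℂ) *
        Matrix.diagonal (fun i => ((max (hA.eigenvalues i) 0 : ℝ) : ℂ)) *
        star (hA.eigenvectorUnitary : Matrix n n ℂ)
        - (hA.eigenvectorUnitary : Matrix n n ℂ) *
        Matrix.diagonal (fun i => ((hA.eigenvalues i : ℝ) : ℂ)) *
        star (hA.eigenvectorUnitary : Matrix n n ℂ)
        = (hA.eigenvectorUnitary : Matrix n n ℂ) *
        Matrix.diagonal (fun i => ((max (hA.eigenvalues i) 0 - hA.eigenvalues i : ℝ) : ℂ)) *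
        star (hA.eigenvectorUnitary : Matrix n n ℂ) := by
      rw [← Matrix.sub_mul, ← Matrix.mul_sub, Matrix.diagonal_sub]
      refine congrArg (fun d => (hA.eigenvectorUnitary : Matrix n n ℂ) * Matrix.diagonal d *
        star (hA.eigenvectorUnitary : Matrix n n ℂ)) ?_
      funext i
      push_cast
      ring
    rw [matPos, dif_pos hA, ← h1, ← spectral_decomp hA]
  rw [hd]
  exact conj_diag_posSemidef _ _ fun i => by
    have h0 : (0:ℝ) ≤ max (hA.eigenvalues i) 0 - hA.eigenvalues i :=
      sub_nonneg.mpr (le_max_left _ _)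
    exact_mod_cast h0

lemma conj_diag_mul {W D Dl B : Matrix n n ℂ} (hW : W * star W = 1)
    (hd : star W * B * W = Dl) :
    (W * D * star W) * B = W * (D * Dl) * star W := by
  have hWB : star W * B = Dl * star W := by
    calc star W * B = star W * B * (W * star W) := by rw [hW, mul_one]
    _ = (star W * B * W) * star W := by noncomm_ring
    _ = Dl * star W := by rw [hd]
  calc (W * D * star W) * B = W * D * (star W * B) := by noncomm_ring
  _ = W * D * (Dl * star W) := by rw [hWB]
  _ = W * (D * Dl) * star W := by noncomm_ring

lemma star_mul_self_mul_eq_diag {A : Matrix n n ℂ} (hA : A.IsHermitian) :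
    star (hA.eigenvectorUnitary : Matrix n n ℂ) * A * (hA.eigenvectorUnitary : Matrix n n ℂ)
      = Matrix.diagonal (fun i => ((hA.eigenvalues i : ℝ) : ℂ)) := by
  have h := hA.conjStarAlgAut_star_eigenvectorUnitary
  rw [Unitary.conjStarAlgAut_apply, Unitary.coe_star, star_star] at h
  exact h

lemma projNonneg_mul_self {A : Matrix n n ℂ} (hA : A.IsHermitian) :
    projNonneg A * A = matPos A := by
  rw [projNonneg, dif_pos hA, matPos, dif_pos hA,
    conj_diag_mul (eigU_mul_star_self hA) (star_mul_self_mul_eq_diag hA),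
    Matrix.diagonal_mul_diagonal]
  refine congrArg (fun d => (hA.eigenvectorUnitary : Matrix n n ℂ) * Matrix.diagonal d *
    star (hA.eigenvectorUnitary : Matrix n n ℂ)) ?_
  funext i
  by_cases h : 0 ≤ hA.eigenvalues i
  · simp [h, max_eq_left h]
  · simp [h, max_eq_right (le_of_not_ge h)]

lemma projNonneg_posSemidef {A : Matrix n n ℂ} (hA : A.IsHermitian) :
    (projNonneg A).PosSemidef := by
  rw [projNonneg, dif_pos hA]
  exact conj_diag_posSemidef _ _ fun i => by positivity

lemma one_sub_projNonneg_posSemidef {A : Matrix n n ℂ} (hA : A.IsHermitian) :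
    ((1 : Matrix n n ℂ) - projNonneg A).PosSemidef := by
  have h1 : (1 : Matrix n n ℂ) - projNonneg A = (hA.eigenvectorUnitary : Matrix n n ℂ) *
      Matrix.diagonal (fun i => 1 - (if 0 ≤ hA.eigenvalues i then (1:ℂ) else 0)) *
      star (hA.eigenvectorUnitary : Matrix n n ℂ) := by
    rw [projNonneg, dif_pos hA, ← Matrix.diagonal_sub, Matrix.mul_sub, Matrix.sub_mul,
      Matrix.diagonal_one, Matrix.mul_one, eigU_mul_star_self hA]
  rw [h1]
  exact conj_diag_posSemidef _ _ fun i => by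
    by_cases h : 0 ≤ hA.eigenvalues i <;> simp [h]

lemma trace_conj_eq {W D : Matrix n n ℂ} (hW : star W * W = 1) :
    (W * D * star W).trace = D.trace := by
  rw [Matrix.trace_mul_cycle, hW, Matrix.one_mul]

end Spectral

/-- Data-processing inequality for `trPos` under a trace-preserving map
`X ↦ ∑ⱼ Vⱼ X Vⱼᴴ` with `∑ⱼ Vⱼᴴ Vⱼ = 1`. -/
lemma trPos_conj_le {J : Type*} [Fintype J] (V : J → Matrix n n ℂ)
    (hV : ∑ j, (V j)ᴴ * V j = 1) {D : Matrix n n ℂ} (hD : D.IsHermitian) :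
    trPos (∑ j, V j * D * (V j)ᴴ) ≤ trPos D := by
  classical
  set Dp := matPos D with hDpdef
  set Dm := matPos D - D with hDmdef
  have hDpPsd : Dp.PosSemidef := matPos_posSemidef hD
  have hDmPsd : Dm.PosSemidef := matPos_sub_posSemidef hD
  set C := ∑ j, V j * D * (V j)ᴴ with hCdef
  have hC : C.IsHermitian := isHermitian_sum fun j => by
    simp only [Matrix.IsHermitian, Matrix.conjTranspose_mul,
      Matrix.conjTranspose_conjTranspose, hD.eq, Matrix.mul_assoc]
  set P := projNonneg C with hPdef
  have hPpsd : P.PosSemidef := projNonneg_posSemidef hC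
  have hΦp : (∑ j, V j * Dp * (V j)ᴴ).PosSemidef :=
    posSemidef_sum fun j => hDpPsd.mul_mul_conjTranspose_same (V j)
  have hΦm : (∑ j, V j * Dm * (V j)ᴴ).PosSemidef :=
    posSemidef_sum fun j => hDmPsd.mul_mul_conjTranspose_same (V j)
  have hsplitC : C = (∑ j, V j * Dp * (V j)ᴴ) - (∑ j, V j * Dm * (V j)ᴴ) := by
    rw [← Finset.sum_sub_distrib]
    refine Finset.sum_congr rfl fun j _ => ?_
    rw [← Matrix.sub_mul, ← Matrix.mul_sub, hDmdef, sub_sub_cancel]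
  have htrC : trPos C = (P * C).trace.re := by
    rw [trPos, ← projNonneg_mul_self hC]
  have htrΦp : (∑ j, V j * Dp * (V j)ᴴ).trace = Dp.trace := by
    rw [Matrix.trace_sum]
    calc ∑ j, (V j * Dp * (V j)ᴴ).trace = ∑ j, ((V j)ᴴ * V j * Dp).trace :=
          Finset.sum_congr rfl fun j _ => Matrix.trace_mul_cycle (V j) Dp (V j)ᴴ
    _ = ((∑ j, (V j)ᴴ * V j) * Dp).trace := by rw [Finset.sum_mul, Matrix.trace_sum]
    _ = Dp.trace := by rw [hV, Matrix.one_mul]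
  have step1 : (P * C).trace.re ≤ (P * (∑ j, V j * Dp * (V j)ᴴ)).trace.re := by
    rw [hsplitC, Matrix.mul_sub, Matrix.trace_sub, Complex.sub_re]
    have := trace_mul_re_nonneg hPpsd hΦm
    linarith
  have step2 : (P * (∑ j, V j * Dp * (V j)ᴴ)).trace.re
      ≤ (∑ j, V j * Dp * (V j)ᴴ).trace.re := by
    have hid : (∑ j, V j * Dp * (V j)ᴴ).trace
        = (P * (∑ j, V j * Dp * (V j)ᴴ)).trace
          + (((1:Matrix n n ℂ) - P) * (∑ j, V j * Dp * (V j)ᴴ)).trace := by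
      rw [← Matrix.trace_add, ← Matrix.add_mul, add_sub_cancel, Matrix.one_mul]
    have h2 := trace_mul_re_nonneg (one_sub_projNonneg_posSemidef hC) hΦp
    have := congrArg Complex.re hid
    rw [Complex.add_re] at this
    linarith
  calc trPos C = (P * C).trace.re := htrC
  _ ≤ (P * (∑ j, V j * Dp * (V j)ᴴ)).trace.re := step1
  _ ≤ (∑ j, V j * Dp * (V j)ᴴ).trace.re := step2
  _ = Dp.trace.re := by rw [htrΦp]
  _ = trPos D := rfl

end Aux

section KronAux

lemma kron_conjTranspose {m p : Type*} [Fintype m] [Fintype p]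
    (A : Matrix m m ℂ) (B : Matrix p p ℂ) : (A ⊗ₖ B)ᴴ = Aᴴ ⊗ₖ Bᴴ := by
  ext ⟨i, k⟩ ⟨j, l⟩
  simp [Matrix.conjTranspose_apply, Matrix.kroneckerMap_apply, mul_comm]

lemma one_kron_sum {m p : Type*} [Fintype m] [Fintype p] [DecidableEq m]
    {J : Type*} [Fintype J] (X : J → Matrix p p ℂ) :
    (1 : Matrix m m ℂ) ⊗ₖ (∑ j, X j) = ∑ j, (1 : Matrix m m ℂ) ⊗ₖ X j := by
  ext ⟨i, k⟩ ⟨j, l⟩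
  simp [Matrix.kroneckerMap_apply, Matrix.sum_apply, Finset.mul_sum]

lemma trA_sum {dA dB : ℕ} {J : Type*} [Fintype J]
    (M : J → Matrix (Fin dA × Fin dB) (Fin dA × Fin dB) ℂ) :
    trA (∑ j, M j) = ∑ j, trA (M j) := by
  ext k l
  simp [trA, Matrix.sum_apply]
  exact Finset.sum_comm

lemma trA_isHermitian {dA dB : ℕ} {M : Matrix (Fin dA × Fin dB) (Fin dA × Fin dB) ℂ}
    (hM : M.IsHermitian) : (trA M).IsHermitian := by
  ext k l
  simp only [Matrix.conjTranspose_apply, trA, Matrix.of_apply, star_sum]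
  refine Finset.sum_congr rfl fun i _ => ?_
  exact congrFun (congrFun hM (i, k)) (i, l)

lemma star_ite' (p : Prop) [Decidable p] (x : ℂ) :
    star (if p then x else 0) = if p then star x else 0 := by split_ifs <;> simp

lemma kron_one_B {dA dB : ℕ} (B : Matrix (Fin dB) (Fin dB) ℂ)
    (M : Matrix (Fin dA × Fin dB) (Fin dA × Fin dB) ℂ) :
    trA (((1 : Matrix (Fin dA) (Fin dA) ℂ) ⊗ₖ B) * M * ((1 : Matrix (Fin dA) (Fin dA) ℂ) ⊗ₖ B)ᴴ)
      = B * trA M * Bᴴ := by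
  ext k l
  simp only [trA, Matrix.of_apply, Matrix.mul_apply, Matrix.kroneckerMap_apply,
    Matrix.conjTranspose_apply, Matrix.one_apply, Fintype.sum_prod_type, star_ite', star_one,
    star_zero, star_mul', ite_mul, one_mul, zero_mul, mul_ite, mul_one, mul_zero,
    Finset.sum_ite_irrel, Finset.sum_const_zero, Finset.sum_ite_eq, Finset.sum_ite_eq',
    Finset.mem_univ, if_true, Finset.sum_mul, Finset.mul_sum]
  rw [Finset.sum_comm]
  exact Finset.sum_congr rfl fun d _ => Finset.sum_comm

lemma kron_A_one {dA dB : ℕ} (A : Matrix (Fin dA) (Fin dA) ℂ) (hA : Aᴴ * A = 1)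
    (N : Matrix (Fin dA × Fin dB) (Fin dA × Fin dB) ℂ) :
    trA ((A ⊗ₖ (1 : Matrix (Fin dB) (Fin dB) ℂ)) * N * (A ⊗ₖ (1 : Matrix (Fin dB) (Fin dB) ℂ))ᴴ)
      = trA N := by
  have key : ∀ a c : Fin dA, (∑ i, star (A i c) * A i a) = if c = a then 1 else 0 := by
    intro a c
    have h := congrArg (fun X => X c a) hA
    simpa [Matrix.mul_apply, Matrix.conjTranspose_apply, Matrix.one_apply] using h
  ext k l
  simp only [trA, Matrix.of_apply, Matrix.mul_apply, Matrix.kroneckerMap_apply,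
    Matrix.conjTranspose_apply, Matrix.one_apply, Fintype.sum_prod_type, star_ite', star_one,
    star_zero, star_mul', ite_mul, one_mul, zero_mul, mul_ite, mul_one, mul_zero,
    Finset.sum_ite_irrel, Finset.sum_const_zero, Finset.sum_ite_eq, Finset.sum_ite_eq',
    Finset.mem_univ, if_true, Finset.sum_mul, Finset.mul_sum]
  calc ∑ x : Fin dA, ∑ x1 : Fin dA, ∑ x3 : Fin dA, A x x3 * N (x3,k) (x1,l) * star (A x x1)
      = ∑ x1 : Fin dA, ∑ x3 : Fin dA, ∑ x : Fin dA,
          A x x3 * N (x3,k) (x1,l) * star (A x x1) := by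
        rw [Finset.sum_comm]
        exact Finset.sum_congr rfl fun x1 _ => Finset.sum_comm
  _ = ∑ x1 : Fin dA, ∑ x3 : Fin dA, (∑ x, star (A x x1) * A x x3) * N (x3,k) (x1,l) := by
        refine Finset.sum_congr rfl fun x1 _ => Finset.sum_congr rfl fun x3 _ => ?_
        rw [Finset.sum_mul]
        exact Finset.sum_congr rfl fun x _ => by ring
  _ = ∑ x1 : Fin dA, ∑ x3 : Fin dA, (if x1 = x3 then (1:ℂ) else 0) * N (x3,k) (x1,l) := by
        refine Finset.sum_congr rfl fun x1 _ => Finset.sum_congr rfl fun x3 _ => by rw [key]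
  _ = ∑ i, N (i,k) (i,l) := by
        simp [ite_mul, Finset.sum_ite_eq]

lemma trA_kron_conj {dA dB : ℕ} (A : Matrix (Fin dA) (Fin dA) ℂ)
    (hA : Aᴴ * A = 1) (B : Matrix (Fin dB) (Fin dB) ℂ)
    (M : Matrix (Fin dA × Fin dB) (Fin dA × Fin dB) ℂ) :
    trA ((A ⊗ₖ B) * M * (A ⊗ₖ B)ᴴ) = B * trA M * Bᴴ := by
  have hsplit : (A ⊗ₖ B) = (A ⊗ₖ (1 : Matrix (Fin dB) (Fin dB) ℂ)) *
      ((1 : Matrix (Fin dA) (Fin dA) ℂ) ⊗ₖ B) := by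
    rw [← Matrix.mul_kronecker_mul, Matrix.mul_one, Matrix.one_mul]
  have h1 : (A ⊗ₖ B) * M * (A ⊗ₖ B)ᴴ
      = (A ⊗ₖ (1 : Matrix (Fin dB) (Fin dB) ℂ)) *
        (((1 : Matrix (Fin dA) (Fin dA) ℂ) ⊗ₖ B) * M *
          ((1 : Matrix (Fin dA) (Fin dA) ℂ) ⊗ₖ B)ᴴ) *
        (A ⊗ₖ (1 : Matrix (Fin dB) (Fin dB) ℂ))ᴴ := by
    rw [hsplit, Matrix.conjTranspose_mul]
    noncomm_ring
  rw [h1, kron_A_one A hA, kron_one_B]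

lemma kron_conj_one_kron {dA dB : ℕ} (A : Matrix (Fin dA) (Fin dA) ℂ)
    (hA : A * Aᴴ = 1) (B X : Matrix (Fin dB) (Fin dB) ℂ) :
    (A ⊗ₖ B) * ((1 : Matrix (Fin dA) (Fin dA) ℂ) ⊗ₖ X) * (A ⊗ₖ B)ᴴ
      = (1 : Matrix (Fin dA) (Fin dA) ℂ) ⊗ₖ (B * X * Bᴴ) := by
  rw [kron_conjTranspose, ← Matrix.mul_kronecker_mul, ← Matrix.mul_kronecker_mul,
    Matrix.mul_one, hA]

lemma vecMulVec_isHermitian {m : Type*} [Fintype m] (ψ : m → ℂ) :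
    (Matrix.vecMulVec ψ (star ψ)).IsHermitian := by
  ext i j
  simp [Matrix.conjTranspose_apply, Matrix.vecMulVec_apply, mul_comm]

end KronAux

/-- Monotonicity of the conditional information spectrum entropy of a pure state under an LOCC
map in Lo–Popescu form `X ↦ ∑ⱼ (Uⱼ ⊗ Kⱼ) X (Uⱼᴴ ⊗ Kⱼᴴ)`:
`D̲_s^ε(σ_AB ‖ 1_A ⊗ σ_B) ≤ D̲_s^ε(ψ_AB ‖ 1_A ⊗ ψ_B)`, i.e.
`H̄_s^ε(A|B)_ψ ≤ H̄_s^ε(A|B)_σ`. -/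
theorem condEntropy_LOCC_mono {dA dB : ℕ} (ψ : Fin dA × Fin dB → ℂ)
    (hψ : ∑ x, ‖ψ x‖ ^ 2 = 1)
    {J : Type} [Fintype J] (U : J → Matrix (Fin dA) (Fin dA) ℂ)
    (hU : ∀ j, U j ∈ Matrix.unitaryGroup (Fin dA) ℂ)
    (K : J → Matrix (Fin dB) (Fin dB) ℂ)
    (hK : ∑ j, (K j)ᴴ * K j = (1 : Matrix (Fin dB) (Fin dB) ℂ))
    (ε : ℝ) (hε0 : 0 < ε) (hε1 : ε < 1) :
    DlowE ε (∑ j, (U j ⊗ₖ K j) * Matrix.vecMulVec ψ (star ψ) * (U j ⊗ₖ K j)ᴴ)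
        ((1 : Matrix (Fin dA) (Fin dA) ℂ) ⊗ₖ
          trA (∑ j, (U j ⊗ₖ K j) * Matrix.vecMulVec ψ (star ψ) * (U j ⊗ₖ K j)ᴴ)) ≤
      DlowE ε (Matrix.vecMulVec ψ (star ψ))
        ((1 : Matrix (Fin dA) (Fin dA) ℂ) ⊗ₖ trA (Matrix.vecMulVec ψ (star ψ))) := by
  classical
  set Ψ := Matrix.vecMulVec ψ (star ψ) with hΨdef
  have hUU : ∀ j, (U j)ᴴ * U j = 1 := fun j => by
    have h := Matrix.mem_unitaryGroup_iff'.mp (hU j)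
    simpa [Matrix.star_eq_conjTranspose] using h
  have hUU' : ∀ j, U j * (U j)ᴴ = 1 := fun j => by
    have h := Matrix.mem_unitaryGroup_iff.mp (hU j)
    simpa [Matrix.star_eq_conjTranspose] using h
  have hVsum : ∑ j, (U j ⊗ₖ K j)ᴴ * (U j ⊗ₖ K j) = 1 := by
    calc ∑ j, (U j ⊗ₖ K j)ᴴ * (U j ⊗ₖ K j)
        = ∑ j, (1 : Matrix (Fin dA) (Fin dA) ℂ) ⊗ₖ ((K j)ᴴ * K j) := by
          refine Finset.sum_congr rfl fun j _ => ?_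
          rw [kron_conjTranspose, ← Matrix.mul_kronecker_mul, hUU j]
    _ = (1 : Matrix (Fin dA) (Fin dA) ℂ) ⊗ₖ (∑ j, (K j)ᴴ * K j) := (one_kron_sum _).symm
    _ = 1 := by rw [hK, Matrix.one_kronecker_one]
  have hΨherm : Ψ.IsHermitian := vecMulVec_isHermitian ψ
  have hσeq : (1 : Matrix (Fin dA) (Fin dA) ℂ) ⊗ₖ trA (∑ j, (U j ⊗ₖ K j) * Ψ * (U j ⊗ₖ K j)ᴴ)
      = ∑ j, (U j ⊗ₖ K j) * ((1 : Matrix (Fin dA) (Fin dA) ℂ) ⊗ₖ trA Ψ) * (U j ⊗ₖ K j)ᴴ := by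
    rw [trA_sum]
    calc (1 : Matrix (Fin dA) (Fin dA) ℂ) ⊗ₖ (∑ j, trA ((U j ⊗ₖ K j) * Ψ * (U j ⊗ₖ K j)ᴴ))
        = (1 : Matrix (Fin dA) (Fin dA) ℂ) ⊗ₖ (∑ j, K j * trA Ψ * (K j)ᴴ) := by
          rw [Finset.sum_congr rfl fun j _ => trA_kron_conj (U j) (hUU j) (K j) Ψ]
    _ = ∑ j, (1 : Matrix (Fin dA) (Fin dA) ℂ) ⊗ₖ (K j * trA Ψ * (K j)ᴴ) := one_kron_sum _
    _ = ∑ j, (U j ⊗ₖ K j) * ((1 : Matrix (Fin dA) (Fin dA) ℂ) ⊗ₖ trA Ψ) * (U j ⊗ₖ K j)ᴴ :=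
          Finset.sum_congr rfl fun j _ => (kron_conj_one_kron (U j) (hUU' j) (K j) (trA Ψ)).symm
  have hkronherm : ((1 : Matrix (Fin dA) (Fin dA) ℂ) ⊗ₖ trA Ψ).IsHermitian := by
    rw [Matrix.IsHermitian, kron_conjTranspose, Matrix.conjTranspose_one,
      (trA_isHermitian hΨherm).eq]
  simp only [DlowE]
  apply sSup_le_sSup
  apply Set.image_mono
  intro γ hγ
  simp only [Set.mem_setOf_eq] at hγ ⊢
  have hD : (Ψ - (2:ℝ)^γ • ((1 : Matrix (Fin dA) (Fin dA) ℂ) ⊗ₖ trA Ψ)).IsHermitian := by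
    refine hΨherm.sub ?_
    rw [Matrix.IsHermitian, Matrix.conjTranspose_smul, star_trivial, hkronherm.eq]
  have hrw : (∑ j, (U j ⊗ₖ K j) * Ψ * (U j ⊗ₖ K j)ᴴ)
      - (2:ℝ)^γ • ((1 : Matrix (Fin dA) (Fin dA) ℂ) ⊗ₖ
          trA (∑ j, (U j ⊗ₖ K j) * Ψ * (U j ⊗ₖ K j)ᴴ))
      = ∑ j, (U j ⊗ₖ K j) *
          (Ψ - (2:ℝ)^γ • ((1 : Matrix (Fin dA) (Fin dA) ℂ) ⊗ₖ trA Ψ)) * (U j ⊗ₖ K j)ᴴ := by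
    rw [hσeq, Finset.smul_sum, ← Finset.sum_sub_distrib]
    refine Finset.sum_congr rfl fun j _ => ?_
    rw [Matrix.mul_sub, Matrix.sub_mul, mul_smul_comm, smul_mul_assoc]
  rw [hrw] at hγ
  exact le_trans hγ (trPos_conj_le (fun j => U j ⊗ₖ K j) hVsum hD)
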